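/- Let P, P₁, P₂ be finite ranked posets with rank functions rk, rk₁, rk₂, let ι be a Cartesian embedding of P into (P₁,P₂), and let H : P → ℤ be defined by H(p) = rk₁(ι(p)₁) − rk₂(ι(p)₂). Then toggle-promotion TogPro_H is conjugate to rowmotion Row in the toggle group of P: there exists an element w of the toggle group of P with TogPro_H = w ∘ Row ∘ w⁻¹ as permutations of J(P). -/

import Mathlib

/-- An order ideal (downward-closed subset) of a poset. -/
def IsIdeal {Q : Type*} [PartialOrder Q] (I : Set Q) : Prop :=
  ∀ ⦃a b : Q⦄, a ≤ b → b ∈ I → a ∈ I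

/-- `J(Q)`: the order ideals of `Q`. -/
def Ideals (Q : Type*) [PartialOrder Q] : Type _ := {I : Set Q // IsIdeal I}

open Classical in
/-- The toggle `t_x`: replace `I` by the symmetric difference `I ∆ {x}` if
that set is an order ideal, and do nothing otherwise. -/
noncomputable def toggle {Q : Type*} [PartialOrder Q] (x : Q) (I : Ideals Q) :
    Ideals Q :=
  if h : IsIdeal (symmDiff I.1 {x}) then ⟨symmDiff I.1 {x}, h⟩ else I

/-- Each toggle is an involution. -/
theorem toggle_toggle {Q : Type*} [PartialOrder Q] (x : Q) (I : Ideals Q) :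
    toggle x (toggle x I) = I := by
  classical
  by_cases h : IsIdeal (symmDiff I.1 {x})
  · have h1 : toggle x I = ⟨symmDiff I.1 {x}, h⟩ := dif_pos h
    rw [h1]
    have hc : symmDiff (symmDiff I.1 {x}) {x} = I.1 := symmDiff_symmDiff_cancel_right {x} I.1
    have h2 : IsIdeal (symmDiff (symmDiff I.1 {x}) {x}) := by rw [hc]; exact I.2
    have h3 : toggle x (⟨symmDiff I.1 {x}, h⟩ : Ideals Q) =
        ⟨symmDiff (symmDiff I.1 {x}) {x}, h2⟩ := dif_pos h2
    rw [h3]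
    exact Subtype.ext hc
  · have h1 : toggle x I = I := dif_neg h
    rw [h1, h1]

/-- The toggle `t_x` as a permutation of `J(Q)`. -/
noncomputable def togglePerm {Q : Type*} [PartialOrder Q] (x : Q) :
    Equiv.Perm (Ideals Q) :=
  ⟨toggle x, toggle x, toggle_toggle x, toggle_toggle x⟩

/-- The toggle group of `Q`: the subgroup of permutations of `J(Q)` generated
by the toggles. -/
noncomputable def toggleGroup (Q : Type*) [PartialOrder Q] :
    Subgroup (Equiv.Perm (Ideals Q)) :=
  Subgroup.closure (Set.range (togglePerm (Q := Q)))

/-- Rowmotion: send the order ideal `I` to the order ideal generated by the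
minimal elements of the complement of `I`. -/
def rowmotion {Q : Type*} [PartialOrder Q] (I : Ideals Q) : Ideals Q :=
  ⟨{y : Q | ∃ m : Q, (m ∉ I.1 ∧ ∀ z : Q, z ∉ I.1 → z ≤ m → z = m) ∧ y ≤ m},
    fun _ _ hab hb => hb.imp fun _ h => ⟨h.1, hab.trans h.2⟩⟩

section Part1
variable {Q : Type*} [PartialOrder Q]

/-- The condition under which the toggle at `y` acts nontrivially. -/
def Phi (y : Q) (A : Set Q) : Prop :=
  (y ∈ A ∧ ∀ z ∈ A, ¬ y < z) ∨ (y ∉ A ∧ ∀ z : Q, z < y → z ∈ A)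

theorem symmDiff_singleton_of_mem {A : Set Q} {y : Q} (h : y ∈ A) :
    symmDiff A {y} = A \ {y} := by
  ext w
  simp only [Set.mem_symmDiff, Set.mem_singleton_iff, Set.mem_diff]
  constructor
  · rintro (⟨hw, hne⟩ | ⟨rfl, hw⟩)
    · exact ⟨hw, hne⟩
    · exact absurd h hw
  · rintro ⟨hw, hne⟩; exact Or.inl ⟨hw, hne⟩

theorem symmDiff_singleton_of_not_mem {A : Set Q} {y : Q} (h : y ∉ A) :
    symmDiff A {y} = A ∪ {y} := by
  ext w
  simp only [Set.mem_symmDiff, Set.mem_singleton_iff, Set.mem_union]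
  constructor
  · rintro (⟨hw, _⟩ | ⟨rfl, _⟩)
    · exact Or.inl hw
    · exact Or.inr rfl
  · rintro (hw | rfl)
    · exact Or.inl ⟨hw, fun hwy => h (hwy ▸ hw)⟩
    · exact Or.inr ⟨rfl, h⟩

theorem isIdeal_symmDiff_iff {A : Set Q} (hA : IsIdeal A) (y : Q) :
    IsIdeal (symmDiff A {y}) ↔ Phi y A := by
  by_cases hy : y ∈ A
  · rw [symmDiff_singleton_of_mem hy]
    constructor
    · intro hid
      refine Or.inl ⟨hy, fun z hz hlt => ?_⟩
      have : y ∈ A \ {y} := hid hlt.le ⟨hz, fun h => hlt.ne' h⟩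
      exact this.2 rfl
    · rintro (⟨-, hcond⟩ | ⟨hny, -⟩)
      · intro a b hab hb
        refine ⟨hA hab hb.1, fun hay => ?_⟩
        subst hay
        rcases eq_or_lt_of_le hab with rfl | hlt
        · exact hb.2 rfl
        · exact hcond b hb.1 hlt
      · exact absurd hy hny
  · rw [symmDiff_singleton_of_not_mem hy]
    constructor
    · intro hid
      refine Or.inr ⟨hy, fun z hz => ?_⟩
      have : z ∈ A ∪ {y} := hid hz.le (Or.inr rfl)
      rcases this with h | h
      · exact h
      · exact absurd (h : z = y) hz.ne
    · rintro (⟨hyA, -⟩ | ⟨-, hcond⟩)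
      · exact absurd hyA hy
      · intro a b hab hb
        rcases hb with hb | hb
        · exact Or.inl (hA hab hb)
        · rcases eq_or_lt_of_le hab with rfl | hlt
          · exact Or.inr hb
          · exact Or.inl (hcond a (hb ▸ hlt))

theorem toggle_of_phi {y : Q} {I : Ideals Q} (h : Phi y I.1) :
    (toggle y I).1 = symmDiff I.1 {y} := by
  have hc := (isIdeal_symmDiff_iff I.2 y).mpr h
  have h1 : toggle y I = ⟨symmDiff I.1 {y}, hc⟩ := dif_pos hc
  rw [h1]

theorem toggle_of_not_phi {y : Q} {I : Ideals Q} (h : ¬ Phi y I.1) :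
    toggle y I = I := by
  exact dif_neg (fun hc => h ((isIdeal_symmDiff_iff I.2 y).mp hc))

theorem mem_toggle_of_ne {w y : Q} (h : w ≠ y) (I : Ideals Q) :
    w ∈ (toggle y I).1 ↔ w ∈ I.1 := by
  by_cases hp : Phi y I.1
  · rw [toggle_of_phi hp]
    simp only [Set.mem_symmDiff, Set.mem_singleton_iff]
    constructor
    · rintro (⟨hw, -⟩ | ⟨rfl, -⟩)
      · exact hw
      · exact absurd rfl h
    · intro hw; exact Or.inl ⟨hw, h⟩
  · rw [toggle_of_not_phi hp]

theorem phi_congr {A A' : Set Q} (hA' : IsIdeal A') {x y : Q} (hxy : x ≠ y)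
    (h1 : ¬ x ⋖ y) (h2 : ¬ y ⋖ x) (hmem : ∀ w, w ≠ x → (w ∈ A ↔ w ∈ A')) :
    Phi y A → Phi y A' := by
  have hymem : y ∈ A ↔ y ∈ A' := hmem y (Ne.symm hxy)
  rintro (⟨hy, hcond⟩ | ⟨hy, hcond⟩)
  · refine Or.inl ⟨hymem.mp hy, fun z hz hlt => ?_⟩
    rcases eq_or_ne z x with rfl | hzx
    · -- y < x, not a cover, so there is c with y < c < x
      have : ¬ y ⋖ z := h2
      rw [covBy_iff_lt_and_eq_or_eq] at this
      push_neg at this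
      obtain ⟨c, hc1, hc2, hcy, hcz⟩ := this hlt
      have hyc : y < c := lt_of_le_of_ne hc1 (Ne.symm hcy)
      have hcA' : c ∈ A' := hA' hc2 hz
      have hcA : c ∈ A := (hmem c hcz).mpr hcA'
      exact hcond c hcA hyc
    · exact hcond z ((hmem z hzx).mpr hz) hlt
  · refine Or.inr ⟨fun hc => hy (hymem.mpr hc), fun z hz => ?_⟩
    rcases eq_or_ne z x with rfl | hzx
    · -- z = x < y, not a cover, so there is c with x < c < y
      have : ¬ z ⋖ y := h1
      rw [covBy_iff_lt_and_eq_or_eq] at this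
      push_neg at this
      obtain ⟨c, hc1, hc2, hcz, hcy⟩ := this hz
      have hcylt : c < y := lt_of_le_of_ne hc2 hcy
      have hcA : c ∈ A := hcond c hcylt
      have hcA' : c ∈ A' := (hmem c hcz).mp hcA
      exact hA' hc1 hcA'
    · exact (hmem z hzx).mp (hcond z hz)
end Part1
section Part2
variable {Q : Type*} [PartialOrder Q]

theorem toggle_comm {x y : Q} (hxy : x ≠ y) (h1 : ¬ x ⋖ y) (h2 : ¬ y ⋖ x)
    (I : Ideals Q) : toggle x (toggle y I) = toggle y (toggle x I) := by
  have memx : ∀ J : Ideals Q, ∀ w, w ≠ x → (w ∈ J.1 ↔ w ∈ (toggle x J).1) :=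
    fun J w hw => (mem_toggle_of_ne hw J).symm
  have memy : ∀ J : Ideals Q, ∀ w, w ≠ y → (w ∈ J.1 ↔ w ∈ (toggle y J).1) :=
    fun J w hw => (mem_toggle_of_ne hw J).symm
  have hyiff : Phi y (toggle x I).1 ↔ Phi y I.1 := by
    constructor
    · exact phi_congr I.2 hxy h1 h2 (fun w hw => ((memx I w hw)).symm)
    · exact phi_congr (toggle x I).2 hxy h1 h2 (memx I)
  have hxiff : Phi x (toggle y I).1 ↔ Phi x I.1 := by
    constructor
    · exact phi_congr I.2 (Ne.symm hxy) h2 h1 (fun w hw => ((memy I w hw)).symm)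
    · exact phi_congr (toggle y I).2 (Ne.symm hxy) h2 h1 (memy I)
  by_cases hx : Phi x I.1 <;> by_cases hy : Phi y I.1
  · apply Subtype.ext
    rw [toggle_of_phi (hxiff.mpr hx), toggle_of_phi (hyiff.mpr hy),
      toggle_of_phi hx, toggle_of_phi hy, symmDiff_right_comm]
  · rw [toggle_of_not_phi hy, toggle_of_not_phi (fun hc => hy (hyiff.mp hc))]
  · rw [toggle_of_not_phi hx, toggle_of_not_phi (fun hc => hx (hxiff.mp hc))]
  · simp only [toggle_of_not_phi hx, toggle_of_not_phi hy]

theorem togglePerm_comm {x y : Q} (h1 : ¬ x ⋖ y) (h2 : ¬ y ⋖ x) :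
    Commute (togglePerm x) (togglePerm y) := by
  rcases eq_or_ne x y with rfl | hxy
  · exact Commute.refl _
  · apply Equiv.ext
    intro I
    exact toggle_comm hxy h1 h2 I

/-- An up-closed set. -/
def UpClosed {Q : Type*} [PartialOrder Q] (S : Set Q) : Prop :=
  ∀ ⦃u w : Q⦄, u ∈ S → u ≤ w → w ∈ S

/-- The partially-toggled set: `I` outside `S`, rowmotion of `I` inside `S`. -/
def st (S : Set Q) (I : Ideals Q) : Set Q :=
  (I.1 ∩ Sᶜ) ∪ ((rowmotion I).1 ∩ S)

theorem rw_min {I : Ideals Q} {y : Q} (hy : y ∈ (rowmotion I).1) (hyI : y ∉ I.1) :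
    ∀ z : Q, z ∉ I.1 → z ≤ y → z = y := by
  obtain ⟨m, ⟨hm, hmmin⟩, hym⟩ := hy
  have hym' : y = m := hmmin y hyI hym
  subst hym'
  exact fun z hz hzy => hmmin z hz hzy

theorem st_ideal {S : Set Q} (hS : UpClosed S) (I : Ideals Q) : IsIdeal (st S I) := by
  rintro a b hab (⟨hbI, hbS⟩ | ⟨hbR, hbS⟩)
  · refine Or.inl ⟨I.2 hab hbI, fun haS => hbS (hS haS hab)⟩
  · have haR : a ∈ (rowmotion I).1 := (rowmotion I).2 hab hbR
    by_cases haS : a ∈ S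
    · exact Or.inr ⟨haR, haS⟩
    · refine Or.inl ⟨?_, haS⟩
      by_contra haI
      -- a ∈ Rw \ I, so a is minimal in the complement
      have hamin := rw_min haR haI
      -- b ≥ a, b ∉ I (since a ∉ I), b ∈ Rw ⇒ b minimal ⇒ a = b ⇒ a ∈ S, contra
      have hbI : b ∉ I.1 := fun hbI => haI (I.2 hab hbI)
      obtain ⟨m, ⟨hm, hmmin⟩, hbm⟩ := hbR
      have hbm' : b = m := hmmin b hbI hbm
      subst hbm'
      have : a = b := hmmin a haI hab
      subst this
      exact haS hbS

theorem st_empty (I : Ideals Q) : st (∅ : Set Q) I = I.1 := by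
  simp [st]

theorem st_univ (I : Ideals Q) : st (Set.univ : Set Q) I = (rowmotion I).1 := by
  simp [st]

theorem upClosed_union_of_max {S : Set Q} (hS : UpClosed S) {x : Q}
    (hmax : ∀ z : Q, x < z → z ∈ S) : UpClosed (S ∪ {x}) := by
  rintro u w (hu | hu) huw
  · exact Or.inl (hS hu huw)
  · rcases eq_or_lt_of_le huw with rfl | hlt
    · exact Or.inr hu
    · rw [Set.mem_singleton_iff] at hu
      subst hu
      exact Or.inl (hmax w hlt)

theorem toggle_st {S : Set Q} (hS : UpClosed S) {x : Q} (hx : x ∉ S)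
    (hmax : ∀ z : Q, x < z → z ∈ S) (I : Ideals Q) :
    toggle x ⟨st S I, st_ideal hS I⟩ =
      ⟨st (S ∪ {x}) I, st_ideal (upClosed_union_of_max hS hmax) I⟩ := by
  have hoff : ∀ w, w ≠ x → (w ∈ st S I ↔ w ∈ st (S ∪ {x}) I) := by
    intro w hw
    simp only [st, Set.mem_union, Set.mem_inter_iff, Set.mem_compl_iff,
      Set.mem_singleton_iff]
    constructor
    · rintro (⟨h1, h2⟩ | ⟨h1, h2⟩)
      · exact Or.inl ⟨h1, fun hc => hc.elim h2 hw⟩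
      · exact Or.inr ⟨h1, Or.inl h2⟩
    · rintro (⟨h1, h2⟩ | ⟨h1, h2 | h2⟩)
      · exact Or.inl ⟨h1, fun hc => h2 (Or.inl hc)⟩
      · exact Or.inr ⟨h1, h2⟩
      · exact absurd h2 hw
  have hxst : x ∈ st S I ↔ x ∈ I.1 := by
    simp only [st, Set.mem_union, Set.mem_inter_iff, Set.mem_compl_iff]
    constructor
    · rintro (⟨h1, -⟩ | ⟨-, h2⟩)
      · exact h1
      · exact absurd h2 hx
    · intro h; exact Or.inl ⟨h, hx⟩
  have hxst' : x ∈ st (S ∪ {x}) I ↔ x ∈ (rowmotion I).1 := by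
    simp only [st, Set.mem_union, Set.mem_inter_iff, Set.mem_compl_iff,
      Set.mem_singleton_iff]
    tauto
  by_cases hI : x ∈ I.1 <;> by_cases hR : x ∈ (rowmotion I).1
  · -- both: toggle does nothing, sets equal
    have hsets : st S I = st (S ∪ {x}) I := by
      ext w
      rcases eq_or_ne w x with rfl | hw
      · simp only [hxst.2 hI, hxst'.2 hR]
      · exact hoff w hw
    have hmem : x ∈ st S I := hxst.mpr hI
    have : ¬ IsIdeal (symmDiff (st S I) {x}) := by
      rw [symmDiff_singleton_of_mem hmem]
      intro hid
      -- x ∈ Rw: x ≤ m with m minimal; x ∈ I so x ≠ m, x < m; m ∈ st S I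
      obtain ⟨m, ⟨hm, hmmin⟩, hxm⟩ := hR
      have hxnem : x ≠ m := fun h => hm (h ▸ hI)
      have hxltm : x < m := lt_of_le_of_ne hxm hxnem
      have hmS : m ∈ S := hmax m hxltm
      have hmst : m ∈ st S I := Or.inr ⟨⟨m, ⟨hm, hmmin⟩, le_refl m⟩, hmS⟩
      have : x ∈ st S I \ {x} :=
        hid hxm ⟨hmst, fun hmx => hxnem (Set.mem_singleton_iff.mp hmx).symm⟩
      exact this.2 rfl
    rw [show toggle x ⟨st S I, st_ideal hS I⟩ = ⟨st S I, st_ideal hS I⟩ from dif_neg this]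
    exact Subtype.ext hsets
  · -- x ∈ I, x ∉ Rw : toggle removes x
    have hmem : x ∈ st S I := hxst.mpr hI
    have hsets : symmDiff (st S I) {x} = st (S ∪ {x}) I := by
      rw [symmDiff_singleton_of_mem hmem]
      ext w
      rcases eq_or_ne w x with rfl | hw
      · constructor
        · rintro ⟨-, h⟩; exact absurd rfl h
        · intro h; exact absurd (hxst'.mp h) hR
      · simp only [Set.mem_diff, Set.mem_singleton_iff]
        constructor
        · rintro ⟨h, -⟩; exact (hoff w hw).mp h
        · intro h; exact ⟨(hoff w hw).mpr h, hw⟩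
    have hid : IsIdeal (symmDiff (st S I) {x}) := by
      rw [hsets]; exact st_ideal (upClosed_union_of_max hS hmax) I
    rw [show toggle x ⟨st S I, st_ideal hS I⟩ = ⟨symmDiff (st S I) {x}, hid⟩ from dif_pos hid]
    exact Subtype.ext hsets
  · -- x ∉ I, x ∈ Rw : toggle adds x
    have hmem : x ∉ st S I := fun h => hI (hxst.mp h)
    have hsets : symmDiff (st S I) {x} = st (S ∪ {x}) I := by
      rw [symmDiff_singleton_of_not_mem hmem]
      ext w
      rcases eq_or_ne w x with rfl | hw
      · constructor
        · intro _; exact hxst'.mpr hR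
        · intro _; exact Or.inr rfl
      · simp only [Set.mem_union, Set.mem_singleton_iff]
        constructor
        · rintro (h | h)
          · exact (hoff w hw).mp h
          · exact absurd h hw
        · intro h; exact Or.inl ((hoff w hw).mpr h)
    have hid : IsIdeal (symmDiff (st S I) {x}) := by
      rw [hsets]; exact st_ideal (upClosed_union_of_max hS hmax) I
    rw [show toggle x ⟨st S I, st_ideal hS I⟩ = ⟨symmDiff (st S I) {x}, hid⟩ from dif_pos hid]
    exact Subtype.ext hsets
  · -- neither: toggle does nothing
    have hsets : st S I = st (S ∪ {x}) I := by
      ext w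
      rcases eq_or_ne w x with rfl | hw
      · constructor
        · intro h; exact absurd (hxst.mp h) hI
        · intro h; exact absurd (hxst'.mp h) hR
      · exact hoff w hw
    have hmem : x ∉ st S I := fun h => hI (hxst.mp h)
    have : ¬ IsIdeal (symmDiff (st S I) {x}) := by
      rw [symmDiff_singleton_of_not_mem hmem]
      intro hid
      -- x ∉ Rw, x ∉ I: x is not minimal in complement, find z < x, z ∉ I
      have hnotmin : ¬ (x ∉ I.1 ∧ ∀ z : Q, z ∉ I.1 → z ≤ x → z = x) := by
        intro hc
        exact hR ⟨x, hc, le_refl x⟩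
      push_neg at hnotmin
      obtain ⟨z, hz, hzx, hznex⟩ := hnotmin hI
      have hzltx : z < x := lt_of_le_of_ne hzx hznex
      have hzS : z ∉ S := fun hc => hx (hS hc hzx)
      have hzst : z ∉ st S I := by
        rintro (⟨h1, -⟩ | ⟨-, h2⟩)
        · exact hz h1
        · exact hzS h2
      have : z ∈ st S I ∪ {x} := hid hzx (Or.inr rfl)
      rcases this with h | h
      · exact hzst h
      · exact hznex h
    rw [show toggle x ⟨st S I, st_ideal hS I⟩ = ⟨st S I, st_ideal hS I⟩ from dif_neg this]
    exact Subtype.ext hsets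
end Part2
section Part3
variable {Q : Type*} [PartialOrder Q]

/-- Apply toggles along a list (last element of the list applied first). -/
noncomputable def wfun (l : List Q) : Ideals Q → Ideals Q :=
  l.foldr (fun x g => toggle x ∘ g) id

theorem wfun_nil : wfun ([] : List Q) = id := rfl

theorem wfun_cons (x : Q) (l : List Q) : wfun (x :: l) = toggle x ∘ wfun l := rfl

theorem wfun_append (l₁ l₂ : List Q) : wfun (l₁ ++ l₂) = wfun l₁ ∘ wfun l₂ := by
  induction l₁ with
  | nil => rfl
  | cons x t ih => simp [wfun_cons, ih, Function.comp_assoc]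

theorem stApply : ∀ (l : List Q) (S : Set Q) (hS : UpClosed S), l.Nodup →
    (∀ x ∈ l, x ∉ S) → (∀ y ∈ l, ∀ z : Q, y < z → z ∈ S ∨ z ∈ l) →
    l.Pairwise (fun u v => ¬ v < u) →
    ∀ I : Ideals Q, ∃ hideal : IsIdeal (st (S ∪ {x | x ∈ l}) I),
      wfun l ⟨st S I, st_ideal hS I⟩ = ⟨st (S ∪ {x | x ∈ l}) I, hideal⟩ := by
  intro l
  induction l with
  | nil =>
    intro S hS _ _ _ _ I
    have h : S ∪ {x : Q | x ∈ ([] : List Q)} = S := by simp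
    refine ⟨by rw [h]; exact st_ideal hS I, ?_⟩
    exact Subtype.ext (congrArg (fun s => st s I) h.symm)
  | cons x t ih =>
    intro S hS hnd hdisj hup hpw I
    have hpwh : ∀ v ∈ t, ¬ v < x := (List.pairwise_cons.mp hpw).1
    have hpwt : t.Pairwise (fun u v => ¬ v < u) := (List.pairwise_cons.mp hpw).2
    have hupt : ∀ y ∈ t, ∀ z : Q, y < z → z ∈ S ∨ z ∈ t := by
      intro y hy z hz
      rcases hup y (List.mem_cons_of_mem x hy) z hz with h | h
      · exact Or.inl h
      · rcases List.mem_cons.mp h with rfl | h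
        · exact absurd hz (hpwh y hy)
        · exact Or.inr h
    obtain ⟨hid, heq⟩ := ih S hS (List.Nodup.of_cons hnd)
      (fun y hy => hdisj y (List.mem_cons_of_mem x hy)) hupt hpwt I
    -- now toggle x on st (S ∪ t)
    set S' : Set Q := S ∪ {y | y ∈ t} with hS'def
    have hS' : UpClosed S' := by
      rintro u w (hu | hu) huw
      · exact Or.inl (hS hu huw)
      · rcases eq_or_lt_of_le huw with rfl | hlt
        · exact Or.inr hu
        · rcases hupt u hu w hlt with h | h
          · exact Or.inl h
          · exact Or.inr h
    have hxS' : x ∉ S' := by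
      rintro (h | h)
      · exact hdisj x (List.mem_cons_self) h
      · exact (List.nodup_cons.mp hnd).1 h
    have hmax : ∀ z : Q, x < z → z ∈ S' := by
      intro z hz
      rcases hup x (List.mem_cons_self) z hz with h | h
      · exact Or.inl h
      · rcases List.mem_cons.mp h with rfl | h
        · exact absurd hz (lt_irrefl z)
        · exact Or.inr h
    have hsets : S' ∪ {x} = S ∪ {y | y ∈ x :: t} := by
      ext w
      simp only [hS'def, Set.mem_union, Set.mem_setOf_eq, Set.mem_singleton_iff,
        List.mem_cons]
      tauto
    have hid2 : IsIdeal (st (S ∪ {y | y ∈ x :: t}) I) := by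
      rw [← hsets]; exact st_ideal (upClosed_union_of_max hS' hmax) I
    refine ⟨hid2, ?_⟩
    rw [wfun_cons]
    show toggle x (wfun t _) = _
    rw [heq]
    have := toggle_st hS' hxS' hmax I
    -- fix the proof term in ⟨st S' I, _⟩
    have heq2 : (⟨st S' I, hid⟩ : Ideals Q) = ⟨st S' I, st_ideal hS' I⟩ :=
      Subtype.ext rfl
    rw [heq2, this]
    exact Subtype.ext (congrArg (fun s => st s I) hsets)

theorem wfun_eq_rowmotion (l : List Q) (hnd : l.Nodup) (hfull : ∀ x : Q, x ∈ l)
    (hpw : l.Pairwise (fun u v => ¬ v < u)) : wfun l = rowmotion := by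
  funext I
  have h0 : UpClosed (∅ : Set Q) := by rintro u w h -; exact h.elim
  obtain ⟨hid, heq⟩ := stApply l ∅ h0 hnd (fun x _ => Set.notMem_empty x)
    (fun y _ z _ => Or.inr (hfull z)) hpw I
  have h1 : (⟨st ∅ I, st_ideal h0 I⟩ : Ideals Q) = I := Subtype.ext (st_empty I)
  have h2 : (∅ ∪ {x : Q | x ∈ l} : Set Q) = Set.univ := by
    ext w; simp [hfull w]
  conv_lhs => rw [← h1]
  rw [heq]
  apply Subtype.ext
  calc st (∅ ∪ {x : Q | x ∈ l}) I = st Set.univ I := congrArg (fun s => st s I) h2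
    _ = (rowmotion I).1 := st_univ I

/-- The word of a list of toggles, as a permutation. -/
noncomputable def word (l : List Q) : Equiv.Perm (Ideals Q) :=
  (l.map togglePerm).prod

theorem word_nil : word ([] : List Q) = 1 := rfl

theorem word_cons (x : Q) (l : List Q) : word (x :: l) = togglePerm x * word l := by
  simp [word]

theorem word_append (l₁ l₂ : List Q) : word (l₁ ++ l₂) = word l₁ * word l₂ := by
  simp [word]

theorem word_coe (l : List Q) : ⇑(word l) = wfun l := by
  induction l with
  | nil => rfl
  | cons x t ih =>
    rw [word_cons, wfun_cons, ← ih]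
    rfl

theorem word_mem_toggleGroup (l : List Q) : word l ∈ toggleGroup Q := by
  apply Subgroup.list_prod_mem
  intro g hg
  obtain ⟨x, -, rfl⟩ := List.mem_map.mp hg
  exact Subgroup.subset_closure (Set.mem_range_self x)

theorem commute_word {x : Q} {l : List Q} (h : ∀ u ∈ l, Commute (togglePerm x) (togglePerm u)) :
    Commute (togglePerm x) (word l) := by
  apply Commute.list_prod_right
  intro g hg
  obtain ⟨u, hu, rfl⟩ := List.mem_map.mp hg
  exact h u hu

/-- Sort invariance: two sorted (w.r.t. a proper labelling) words are equal. -/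
theorem sortinv (f : Q → ℤ)
    (hcomm : ∀ u v : Q, f u = f v → Commute (togglePerm u) (togglePerm v)) :
    ∀ l₁ l₂ : List Q, l₁.Perm l₂ → l₁.Pairwise (fun u v => f v ≤ f u) →
    l₂.Pairwise (fun u v => f v ≤ f u) → word l₁ = word l₂ := by
  intro l₁
  induction l₁ with
  | nil =>
    intro l₂ hp _ _
    rw [List.Perm.eq_nil hp.symm]
  | cons x t ih =>
    intro l₂ hp hpw₁ hpw₂
    have hx : x ∈ l₂ := hp.mem_iff.mp (List.mem_cons_self)
    obtain ⟨A, B, rfl⟩ := List.append_of_mem hx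
    have hfmax : ∀ u ∈ A ++ x :: B, f u ≤ f x := by
      intro u hu
      have hu' : u ∈ x :: t := hp.symm.mem_iff.mp hu
      rcases List.mem_cons.mp hu' with rfl | hu'
      · exact le_refl _
      · exact (List.pairwise_cons.mp hpw₁).1 u hu'
    have hAeq : ∀ u ∈ A, f u = f x := by
      intro u hu
      have h1 : f u ≤ f x := hfmax u (List.mem_append_left _ hu)
      have h2 : f x ≤ f u := by
        have := List.pairwise_append.mp hpw₂
        exact this.2.2 u hu x (List.mem_cons_self)
      exact le_antisymm h1 h2
    have hcommA : Commute (togglePerm x) (word A) :=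
      commute_word (fun u hu => hcomm x u (hAeq u hu).symm)
    have hperm : t.Perm (A ++ B) := by
      have h1 : (A ++ x :: B).Perm (x :: (A ++ B)) := List.perm_middle
      exact List.Perm.cons_inv (hp.trans h1)
    have hsub : (A ++ B).Sublist (A ++ x :: B) :=
      List.Sublist.append_left (List.sublist_cons_self x B) A
    have hpwAB : (A ++ B).Pairwise (fun u v => f v ≤ f u) :=
      List.Pairwise.sublist hsub hpw₂
    have hrec : word t = word (A ++ B) :=
      ih (A ++ B) hperm (List.pairwise_cons.mp hpw₁).2 hpwAB
    rw [word_cons, hrec, word_append, word_append, word_cons,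
      ← mul_assoc, hcommA.eq, mul_assoc]
end Part3
section Part4

theorem rank_lt {α : Type*} [PartialOrder α] [Finite α] (rk : α → ℤ)
    (h : ∀ x y : α, x ⋖ y → rk y = rk x + 1) :
    ∀ x y : α, x < y → rk x < rk y := fun x =>
  (wellFounded_gt (α := α)).induction
    (C := fun x => ∀ y : α, x < y → rk x < rk y) x
    (fun x IH y hxy => by
      obtain ⟨c, hc1, hc2⟩ := exists_covBy_le_of_lt hxy
      have hrc : rk c = rk x + 1 := h x c hc1
      rcases eq_or_lt_of_le hc2 with rfl | hlt
      · omega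
      · have := IH c hc1.lt y hlt
        omega)

theorem flatMap_pure_eq_map {α β : Type*} (f : α → β) (l : List α) :
    (l.flatMap fun x => [f x]) = l.map f := by
  induction l with
  | nil => rfl
  | cons x t ih => simp [ih]

/-- The ascending list of integers from `lo` to `hi` (same form as in the theorem). -/
def dlist (lo hi : ℤ) : List ℤ :=
  (List.range (hi + 1 - lo).toNat).map fun j => lo + (j : ℤ)

theorem mem_dlist {lo hi i : ℤ} : i ∈ dlist lo hi ↔ lo ≤ i ∧ i ≤ hi := by
  simp only [dlist, List.pure_def, List.bind_eq_flatMap, List.mem_map, List.mem_flatMap,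
    List.mem_range, List.mem_singleton]
  constructor
  · rintro ⟨j, ⟨k, hk, rfl⟩, rfl⟩
    omega
  · intro h2
    exact ⟨(i - lo), ⟨(i - lo).toNat, by omega, by omega⟩, by omega⟩

theorem dlist_pairwise (lo hi : ℤ) : (dlist lo hi).Pairwise (· < ·) := by
  rw [dlist]
  refine List.Pairwise.map _ ?_ ?_ (R := (· < ·))
  · intro a b hab
    omega
  · show ((List.range (hi + 1 - lo).toNat).flatMap fun (a : ℕ) => [(a : ℤ)]).Pairwise (· < ·)
    rw [flatMap_pure_eq_map]
    exact List.Pairwise.map _ (fun a b (hab : a < b) => by omega) List.pairwise_lt_range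

/-- Descending version. -/
def ddlist (lo hi : ℤ) : List ℤ := (dlist lo hi).reverse

theorem mem_ddlist {lo hi i : ℤ} : i ∈ ddlist lo hi ↔ lo ≤ i ∧ i ≤ hi := by
  rw [ddlist, List.mem_reverse]; exact mem_dlist

theorem ddlist_pairwise (lo hi : ℤ) : (ddlist lo hi).Pairwise (· > ·) := by
  rw [ddlist, List.pairwise_reverse]
  exact dlist_pairwise lo hi

theorem ddlist_nodup (lo hi : ℤ) : (ddlist lo hi).Nodup :=
  (ddlist_pairwise lo hi).imp (fun h => ne_of_gt h)

variable {Q : Type*} [PartialOrder Q] [Fintype Q]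

open Classical in
/-- The list of all elements of level `i`. -/
noncomputable def lvl (f : Q → ℤ) (i : ℤ) : List Q :=
  (Finset.univ.filter (fun x => f x = i)).toList

theorem mem_lvl {f : Q → ℤ} {i : ℤ} {x : Q} : x ∈ lvl f i ↔ f x = i := by
  classical
  simp [lvl]

theorem lvl_nodup (f : Q → ℤ) (i : ℤ) : (lvl f i).Nodup := Finset.nodup_toList _

theorem lvl_sorted (f : Q → ℤ) (i : ℤ) :
    (lvl f i).Pairwise (fun u v => f v ≤ f u) :=
  List.pairwise_of_forall_mem_list (fun a ha b hb => by
    rw [mem_lvl.mp ha, mem_lvl.mp hb])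

theorem flat_nodup (ds : List ℤ) (hds : ds.Nodup) (B : ℤ → List Q)
    (hBn : ∀ i, (B i).Nodup) (hBd : ∀ (x : Q) (i j : ℤ), x ∈ B i → x ∈ B j → i = j) :
    (ds.flatMap B).Nodup := by
  induction ds with
  | nil => exact List.nodup_nil
  | cons i ds ih =>
    rw [List.flatMap_cons, List.nodup_append]
    refine ⟨hBn i, ih (List.Nodup.of_cons hds), ?_⟩
    intro a ha b ha' hab
    subst hab
    obtain ⟨j, hj, haj⟩ := List.mem_flatMap.mp ha'
    have : i = j := hBd a i j ha haj
    subst this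
    exact (List.nodup_cons.mp hds).1 hj

theorem flat_sorted (f : Q → ℤ) (ds : List ℤ) (hds : ds.Pairwise (· > ·))
    (B : ℤ → List Q) (hB : ∀ i : ℤ, ∀ x ∈ B i, f x = i) :
    (ds.flatMap B).Pairwise (fun u v => f v ≤ f u) := by
  induction ds with
  | nil => exact List.Pairwise.nil
  | cons i ds ih =>
    rw [List.flatMap_cons, List.pairwise_append]
    refine ⟨List.pairwise_of_forall_mem_list (fun a ha b hb => by
        rw [hB i a ha, hB i b hb]), ih (List.pairwise_cons.mp hds).2, ?_⟩
    intro a ha b hb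
    obtain ⟨j, hj, hbj⟩ := List.mem_flatMap.mp hb
    have hij : i > j := (List.pairwise_cons.mp hds).1 j hj
    rw [hB i a ha, hB j b hbj]
    omega

open Classical in
/-- The canonical word list for the labelling `f`: levels from `hi` down to `lo`. -/
noncomputable def canon (f : Q → ℤ) (lo hi : ℤ) : List Q :=
  (ddlist lo hi).flatMap (lvl f)

theorem mem_canon {f : Q → ℤ} {lo hi : ℤ} {x : Q} :
    x ∈ canon f lo hi ↔ lo ≤ f x ∧ f x ≤ hi := by
  simp only [canon, List.mem_flatMap]
  constructor
  · rintro ⟨i, hi, hx⟩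
    rw [mem_lvl.mp hx]
    exact mem_ddlist.mp hi
  · intro h
    exact ⟨f x, mem_ddlist.mpr h, mem_lvl.mpr rfl⟩

theorem canon_nodup (f : Q → ℤ) (lo hi : ℤ) : (canon f lo hi).Nodup :=
  flat_nodup _ (ddlist_nodup lo hi) _ (lvl_nodup f)
    (fun x i j hi hj => by rw [← mem_lvl.mp hi, ← mem_lvl.mp hj])

theorem canon_sorted (f : Q → ℤ) (lo hi : ℤ) :
    (canon f lo hi).Pairwise (fun u v => f v ≤ f u) :=
  flat_sorted f _ (ddlist_pairwise lo hi) _ (fun i x hx => mem_lvl.mp hx)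

theorem comm_of_eq_f {f : Q → ℤ} (hprop : ∀ u v : Q, u ⋖ v → f u ≠ f v)
    (u v : Q) (huv : f u = f v) : Commute (togglePerm u) (togglePerm v) :=
  togglePerm_comm (fun hc => hprop u v hc huv) (fun hc => hprop v u hc huv.symm)

theorem nodup_append_of {l₁ l₂ : List Q} (h₁ : l₁.Nodup) (h₂ : l₂.Nodup)
    (h : ∀ x ∈ l₁, x ∉ l₂) : (l₁ ++ l₂).Nodup :=
  List.nodup_append'.mpr ⟨h₁, h₂, h⟩
end Part4
section Part5
variable {Q : Type*} [PartialOrder Q] [Fintype Q]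

set_option maxHeartbeats 1000000 in
theorem flip_word (f f' : Q → ℤ) (hprop : ∀ u v : Q, u ⋖ v → f u ≠ f v) (v : Q)
    (hnb : ∀ u : Q, (u ⋖ v ∨ v ⋖ u) → f u = f v + 1) 
    (hf'veq : f' v = f v + 2) (hf'neq : ∀ u : Q, u ≠ v → f' u = f u) (lo hi : ℤ)
    (hlo : ∀ x : Q, lo ≤ f x) (hhi : ∀ x : Q, f x ≤ hi) (hvhi : f v + 2 ≤ hi) :
    word (canon f' lo hi) =
      togglePerm v * word (canon f lo hi) * (togglePerm v)⁻¹ := by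
  classical
  set m := f v with hm
  have hf'v : f' v = m + 2 := hf'veq
  have hf'ne : ∀ u : Q, u ≠ v → f' u = f u := hf'neq
  have hprop' : ∀ u w : Q, u ⋖ w → f' u ≠ f' w := by
    intro u w hc
    by_cases huv : u = v
    · have hwv : w ≠ v := by
        intro h
        rw [huv] at hc
        rw [h] at hc
        exact absurd hc.lt (lt_irrefl v)
      rw [huv] at hc
      rw [huv, hf'v, hf'ne w hwv, hnb w (Or.inr hc)]
      omega
    · by_cases hwv : w = v
      · rw [hwv] at hc
        rw [hwv, hf'v, hf'ne u huv, hnb u (Or.inl hc)]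
        omega
      · rw [hf'ne u huv, hf'ne w hwv]
        exact hprop u w hc
  have hvc : ∀ u : Q, f u ≠ m + 1 → Commute (togglePerm v) (togglePerm u) := by
    intro u hu
    by_cases huv : u = v
    · subst huv; exact Commute.refl _
    · exact togglePerm_comm (fun hc => hu (hnb u (Or.inr hc)))
        (fun hc => hu (hnb u (Or.inl hc)))
  set A1 := canon f (m + 2) hi with hA1
  set A2 := lvl f (m + 1) with hA2
  set E := (lvl f m).erase v with hE
  set C := canon f lo (m - 1) with hC
  have memA1 : ∀ x : Q, x ∈ A1 ↔ m + 2 ≤ f x ∧ f x ≤ hi := fun x => mem_canon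
  have memA2 : ∀ x : Q, x ∈ A2 ↔ f x = m + 1 := fun x => mem_lvl
  have memE : ∀ x : Q, x ∈ E ↔ x ≠ v ∧ f x = m := by
    intro x
    rw [hE, List.Nodup.mem_erase_iff (lvl_nodup f m), mem_lvl]
  have memC : ∀ x : Q, x ∈ C ↔ lo ≤ f x ∧ f x ≤ m - 1 := fun x => mem_canon
  have hvE : v ∉ E := fun h => ((memE v).mp h).1 rfl
  have hvC : v ∉ C := fun h => by have := (memC v).mp h; omega
  have hvA1 : v ∉ A1 := fun h => by have := (memA1 v).mp h; omega
  have hvA2 : v ∉ A2 := fun h => by have := (memA2 v).mp h; omega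
  have hA1n : A1.Nodup := canon_nodup f _ _
  have hA2n : A2.Nodup := lvl_nodup f _
  have hEn : E.Nodup := List.Nodup.erase v (lvl_nodup f m)
  have hCn : C.Nodup := canon_nodup f _ _
  have hECn : (E ++ C).Nodup := nodup_append_of hEn hCn (fun x hx hx' => by
    have h1 := (memE x).mp hx
    have h2 := (memC x).mp hx'
    omega)
  have hvECn : (v :: (E ++ C)).Nodup := List.nodup_cons.mpr
    ⟨fun h => by
      rcases List.mem_append.mp h with h | h
      · exact hvE h
      · exact hvC h, hECn⟩
  have hA12n : (A1 ++ A2).Nodup := nodup_append_of hA1n hA2n (fun x hx hx' => by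
    have h1 := (memA1 x).mp hx
    have h2 := (memA2 x).mp hx'
    omega)
  have hl0n : ((A1 ++ A2) ++ v :: (E ++ C)).Nodup := by
    refine nodup_append_of hA12n hvECn (fun x hx hx' => ?_)
    have hfx : m + 1 ≤ f x := by
      rcases List.mem_append.mp hx with h | h
      · have := (memA1 x).mp h; omega
      · have := (memA2 x).mp h; omega
    rcases List.mem_cons.mp hx' with rfl | h
    · omega
    · rcases List.mem_append.mp h with h | h
      · have := (memE x).mp h; omega
      · have := (memC x).mp h; omega
  have hA1s : A1.Pairwise (fun u w => f w ≤ f u) := canon_sorted f _ _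
  have hA2s : A2.Pairwise (fun u w => f w ≤ f u) := lvl_sorted f _
  have hEs : E.Pairwise (fun u w => f w ≤ f u) :=
    List.Pairwise.sublist List.erase_sublist (lvl_sorted f m)
  have hCs : C.Pairwise (fun u w => f w ≤ f u) := canon_sorted f _ _
  have hECs : (E ++ C).Pairwise (fun u w => f w ≤ f u) := by
    rw [List.pairwise_append]
    refine ⟨hEs, hCs, fun a ha b hb => ?_⟩
    have h1 := (memE a).mp ha
    have h2 := (memC b).mp hb
    omega
  have hl0s : ((A1 ++ A2) ++ v :: (E ++ C)).Pairwise (fun u w => f w ≤ f u) := by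
    rw [List.pairwise_append]
    refine ⟨?_, ?_, ?_⟩
    · rw [List.pairwise_append]
      refine ⟨hA1s, hA2s, fun a ha b hb => ?_⟩
      have h1 := (memA1 a).mp ha
      have h2 := (memA2 b).mp hb
      omega
    · rw [List.pairwise_cons]
      refine ⟨fun u hu => ?_, hECs⟩
      rcases List.mem_append.mp hu with h | h
      · have := (memE u).mp h; omega
      · have := (memC u).mp h; omega
    · intro a ha b hb
      have hfa : m + 1 ≤ f a := by
        rcases List.mem_append.mp ha with h | h
        · have := (memA1 a).mp h; omega
        · have := (memA2 a).mp h; omega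
      have hfb : f b ≤ m := by
        rcases List.mem_cons.mp hb with rfl | h
        · omega
        · rcases List.mem_append.mp h with h | h
          · have := (memE b).mp h; omega
          · have := (memC b).mp h; omega
      omega
  have hcn : (canon f lo hi).Nodup := canon_nodup f lo hi
  have hl0perm : (canon f lo hi).Perm ((A1 ++ A2) ++ v :: (E ++ C)) := by
    rw [List.perm_ext_iff_of_nodup hcn hl0n]
    intro x
    rw [mem_canon]
    constructor
    · intro hx
      rcases eq_or_ne x v with rfl | hxv
      · exact List.mem_append_right _ (List.mem_cons_self)
      · by_cases h1 : m + 2 ≤ f x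
        · exact List.mem_append_left _ (List.mem_append_left _ ((memA1 x).mpr ⟨h1, hx.2⟩))
        · by_cases h2 : f x = m + 1
          · exact List.mem_append_left _ (List.mem_append_right _ ((memA2 x).mpr h2))
          · refine List.mem_append_right _ (List.mem_cons_of_mem _ ?_)
            by_cases h3 : f x = m
            · exact List.mem_append_left _ ((memE x).mpr ⟨hxv, h3⟩)
            · exact List.mem_append_right _ ((memC x).mpr ⟨hx.1, by omega⟩)
    · intro hx
      have h5 := hlo x
      have h6 := hhi x
      rcases List.mem_append.mp hx with h | h
      · rcases List.mem_append.mp h with h | h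
        · have := (memA1 x).mp h; omega
        · have := (memA2 x).mp h; omega
      · rcases List.mem_cons.mp h with rfl | h
        · omega
        · rcases List.mem_append.mp h with h | h
          · have := (memE x).mp h; omega
          · have := (memC x).mp h; omega
  have hcanonf : word (canon f lo hi) = word ((A1 ++ A2) ++ v :: (E ++ C)) :=
    sortinv f (comm_of_eq_f hprop) _ _ hl0perm (canon_sorted f lo hi) hl0s
  have hcommEC : Commute (togglePerm v) (word (E ++ C)) := by
    apply commute_word
    intro u hu
    apply hvc
    rcases List.mem_append.mp hu with h | h
    · have := (memE u).mp h; omega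
    · have := (memC u).mp h; omega
  have hcommA1 : Commute (togglePerm v) (word A1) := by
    apply commute_word
    intro u hu
    apply hvc
    have := (memA1 u).mp hu
    omega
  have hstep1 : word (canon f lo hi) = word (A1 ++ A2 ++ (E ++ C)) * togglePerm v := by
    rw [hcanonf, word_append, word_cons, hcommEC.eq, ← mul_assoc, ← word_append]
  have hl2n : (A1 ++ v :: (A2 ++ (E ++ C))).Nodup := by
    refine nodup_append_of hA1n ?_ ?_
    · refine List.nodup_cons.mpr ⟨fun h => ?_, ?_⟩
      · rcases List.mem_append.mp h with h | h
        · exact hvA2 h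
        · rcases List.mem_append.mp h with h | h
          · exact hvE h
          · exact hvC h
      · refine nodup_append_of hA2n hECn (fun x hx hx' => ?_)
        have h1 := (memA2 x).mp hx
        rcases List.mem_append.mp hx' with h | h
        · have := (memE x).mp h; omega
        · have := (memC x).mp h; omega
    · intro x hx hx'
      have h1 := (memA1 x).mp hx
      rcases List.mem_cons.mp hx' with rfl | h
      · omega
      · rcases List.mem_append.mp h with h | h
        · have := (memA2 x).mp h; omega
        · rcases List.mem_append.mp h with h | h
          · have := (memE x).mp h; omega
          · have := (memC x).mp h; omega
  have hnotv : ∀ x : Q, x ∈ A2 ++ (E ++ C) → x ≠ v := by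
    intro x hx h
    subst h
    rcases List.mem_append.mp hx with h | h
    · exact hvA2 h
    · rcases List.mem_append.mp h with h | h
      · exact hvE h
      · exact hvC h
  have hl2s : (A1 ++ v :: (A2 ++ (E ++ C))).Pairwise (fun u w => f' w ≤ f' u) := by
    have hfval : ∀ x : Q, x ∈ A2 ++ (E ++ C) → f' x ≤ m + 1 := by
      intro x hx
      rw [hf'ne x (hnotv x hx)]
      rcases List.mem_append.mp hx with h | h
      · have := (memA2 x).mp h; omega
      · rcases List.mem_append.mp h with h | h
        · have := (memE x).mp h; omega
        · have := (memC x).mp h; omega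
    rw [List.pairwise_append]
    refine ⟨?_, ?_, ?_⟩
    · refine hA1s.imp_of_mem ?_
      intro a b ha hb hab
      have hav : a ≠ v := fun h => hvA1 (h ▸ ha)
      have hbv : b ≠ v := fun h => hvA1 (h ▸ hb)
      rw [hf'ne a hav, hf'ne b hbv]
      exact hab
    · rw [List.pairwise_cons]
      refine ⟨fun u hu => ?_, ?_⟩
      · rw [hf'v]
        have := hfval u hu
        omega
      · have hfs : (A2 ++ (E ++ C)).Pairwise (fun u w => f w ≤ f u) := by
          rw [List.pairwise_append]
          refine ⟨hA2s, hECs, fun a ha b hb => ?_⟩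
          have ha1 := (memA2 a).mp ha
          have hfb : f b ≤ m := by
            rcases List.mem_append.mp hb with h | h
            · have := (memE b).mp h; omega
            · have := (memC b).mp h; omega
          omega
        refine hfs.imp_of_mem ?_
        intro a b ha hb hab
        rw [hf'ne a (hnotv a ha), hf'ne b (hnotv b hb)]
        exact hab
    · intro a ha b hb
      have hav : a ≠ v := fun h => hvA1 (h ▸ ha)
      have hfa : m + 2 ≤ f' a := by
        rw [hf'ne a hav]
        exact ((memA1 a).mp ha).1
      rcases List.mem_cons.mp hb with rfl | h
      · rw [hf'v]; omega
      · have := hfval b h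
        omega
  have hl2perm : (canon f' lo hi).Perm (A1 ++ v :: (A2 ++ (E ++ C))) := by
    rw [List.perm_ext_iff_of_nodup (canon_nodup f' lo hi) hl2n]
    intro x
    rw [mem_canon]
    constructor
    · intro hx
      rcases eq_or_ne x v with rfl | hxv
      · exact List.mem_append_right _ (List.mem_cons_self)
      · rw [hf'ne x hxv] at hx
        refine ?_
        by_cases h1 : m + 2 ≤ f x
        · exact List.mem_append_left _ ((memA1 x).mpr ⟨h1, hx.2⟩)
        · refine List.mem_append_right _ (List.mem_cons_of_mem _ ?_)
          by_cases h2 : f x = m + 1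
          · exact List.mem_append_left _ ((memA2 x).mpr h2)
          · by_cases h3 : f x = m
            · exact List.mem_append_right _ (List.mem_append_left _ ((memE x).mpr ⟨hxv, h3⟩))
            · exact List.mem_append_right _ (List.mem_append_right _ ((memC x).mpr ⟨hx.1, by omega⟩))
    · intro hx
      have h5 := hlo x
      have h6 := hhi x
      rcases List.mem_append.mp hx with h | h
      · have := (memA1 x).mp h
        have hxv : x ≠ v := fun hc => hvA1 (hc ▸ h)
        rw [hf'ne x hxv]
        omega
      · rcases List.mem_cons.mp h with rfl | h
        · rw [hf'v]
          omega
        · have hxv : x ≠ v := hnotv x h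
          rw [hf'ne x hxv]
          rcases List.mem_append.mp h with h | h
          · have := (memA2 x).mp h; omega
          · rcases List.mem_append.mp h with h | h
            · have := (memE x).mp h; omega
            · have := (memC x).mp h; omega
  have hcanonf' : word (canon f' lo hi) = word (A1 ++ v :: (A2 ++ (E ++ C))) :=
    sortinv f' (comm_of_eq_f hprop') _ _ hl2perm (canon_sorted f' lo hi) hl2s
  have hstep2 : word (canon f' lo hi) = togglePerm v * word (A1 ++ A2 ++ (E ++ C)) := by
    rw [hcanonf', word_append, word_cons, ← mul_assoc, ← hcommA1.eq, mul_assoc,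
      ← word_append, List.append_assoc]
  rw [hstep2, hstep1]
  simp [mul_assoc]
end Part5
section Part6
variable {Q : Type*} [PartialOrder Q] [Fintype Q]

theorem foldl_wfun (T : ℤ → List Q) : ∀ (ds : List ℤ) (h : Ideals Q → Ideals Q),
    ds.foldl (fun g i => wfun (T i) ∘ g) h = wfun (ds.reverse.flatMap T) ∘ h := by
  intro ds
  induction ds with
  | nil => intro h; simp [wfun_nil]
  | cons i ds ih =>
    intro h
    rw [List.foldl_cons, ih, List.reverse_cons, List.flatMap_append,
      wfun_append]
    have : wfun ([i].flatMap T) = wfun (T i) := by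
      simp [List.flatMap_singleton]
    rw [this, Function.comp_assoc]

theorem conj_main (g : Q → ℤ)
    (hgprop : ∀ u w : Q, u ⋖ w → (g w = g u + 1 ∨ g w = g u - 1)) (lo hi : ℤ)
    (hghi : ∀ x : Q, g x ≤ hi) :
    ∀ N : ℕ, ∀ f : Q → ℤ,
    (∀ u w : Q, u ⋖ w → (f w = f u + 1 ∨ f w = f u - 1)) →
    (∀ x : Q, lo ≤ f x) → (∀ x : Q, f x ≤ g x) →
    (∀ x : Q, (2 : ℤ) ∣ (g x - f x)) →
    (∑ x : Q, (g x - f x).toNat = N) →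
    ∃ w ∈ toggleGroup Q,
      word (canon f lo hi) = w * word (canon g lo hi) * w⁻¹ := by
  intro N
  induction N using Nat.strong_induction_on with
  | _ N IH =>
    intro f hfprop hlo hfg hdvd hsum
    classical
    by_cases heq : ∀ x : Q, f x = g x
    · have hfgeq : f = g := funext heq
      refine ⟨1, one_mem _, ?_⟩
      rw [hfgeq]
      group
    · push_neg at heq
      obtain ⟨x₀, hx₀⟩ := heq
      have hsne : (Finset.univ.filter (fun v : Q => f v < g v)).Nonempty :=
        ⟨x₀, Finset.mem_filter.mpr ⟨Finset.mem_univ _,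
          lt_of_le_of_ne (hfg x₀) hx₀⟩⟩
      obtain ⟨v, hvs, hvmin⟩ := Finset.exists_min_image _ f hsne
      have hv : f v < g v := (Finset.mem_filter.mp hvs).2
      have hv2 : f v + 2 ≤ g v := by
        obtain ⟨k, hk⟩ := hdvd v
        omega
      have hnb : ∀ u : Q, (u ⋖ v ∨ v ⋖ u) → f u = f v + 1 := by
        intro u hu
        have hadj : f u = f v + 1 ∨ f u = f v - 1 := by
          rcases hu with h | h
          · rcases hfprop u v h with h' | h' <;> omega
          · rcases hfprop v u h with h' | h' <;> omega
        have hgadj : g u = g v + 1 ∨ g u = g v - 1 := by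
          rcases hu with h | h
          · rcases hgprop u v h with h' | h' <;> omega
          · rcases hgprop v u h with h' | h' <;> omega
        rcases hadj with h | h
        · exact h
        · exfalso
          by_cases hug : f u < g u
          · have : f v ≤ f u := hvmin u (Finset.mem_filter.mpr ⟨Finset.mem_univ _, hug⟩)
            omega
          · have : f u = g u := le_antisymm (hfg u) (not_lt.mp hug)
            omega
      set f' : Q → ℤ := fun x => if x = v then f v + 2 else f x with hf'def
      have hf'v : f' v = f v + 2 := by simp [hf'def]
      have hf'ne : ∀ u : Q, u ≠ v → f' u = f u := by
        intro u hu; simp [hf'def, hu]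
      have hf'prop : ∀ u w : Q, u ⋖ w → (f' w = f' u + 1 ∨ f' w = f' u - 1) := by
        intro u w hc
        by_cases huv : u = v
        · have hwv : w ≠ v := by
            intro h
            rw [huv] at hc; rw [h] at hc
            exact absurd hc.lt (lt_irrefl v)
          rw [huv] at hc
          rw [huv, hf'v, hf'ne w hwv, hnb w (Or.inr hc)]
          right; ring
        · by_cases hwv : w = v
          · rw [hwv] at hc
            rw [hwv, hf'v, hf'ne u huv, hnb u (Or.inl hc)]
            left; ring
          · rw [hf'ne u huv, hf'ne w hwv]
            exact hfprop u w hc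
      have hlo' : ∀ x : Q, lo ≤ f' x := by
        intro x
        by_cases hx : x = v
        · rw [hx, hf'v]; have := hlo v; omega
        · rw [hf'ne x hx]; exact hlo x
      have hfg' : ∀ x : Q, f' x ≤ g x := by
        intro x
        by_cases hx : x = v
        · rw [hx, hf'v]; omega
        · rw [hf'ne x hx]; exact hfg x
      have hdvd' : ∀ x : Q, (2 : ℤ) ∣ (g x - f' x) := by
        intro x
        by_cases hx : x = v
        · rw [hx, hf'v]
          obtain ⟨k, hk⟩ := hdvd v
          exact ⟨k - 1, by omega⟩
        · rw [hf'ne x hx]; exact hdvd x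
      have hsplit : (g v - f v).toNat + ∑ x ∈ Finset.univ.erase v, (g x - f x).toNat
          = ∑ x : Q, (g x - f x).toNat :=
        Finset.add_sum_erase Finset.univ (fun x => (g x - f x).toNat) (Finset.mem_univ v)
      have hsplit' : (g v - f' v).toNat + ∑ x ∈ Finset.univ.erase v, (g x - f' x).toNat
          = ∑ x : Q, (g x - f' x).toNat :=
        Finset.add_sum_erase Finset.univ (fun x => (g x - f' x).toNat) (Finset.mem_univ v)
      have herase : ∑ x ∈ Finset.univ.erase v, (g x - f' x).toNat
          = ∑ x ∈ Finset.univ.erase v, (g x - f x).toNat := by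
        refine Finset.sum_congr rfl (fun x hx => ?_)
        rw [hf'ne x (Finset.ne_of_mem_erase hx)]
      have hsum' : ∑ x : Q, (g x - f' x).toNat < N := by
        rw [← hsplit', herase, hf'v]
        rw [← hsum, ← hsplit]
        omega
      obtain ⟨w', hw', hweq⟩ := IH _ hsum' f' hf'prop hlo' hfg' hdvd' rfl
      have hflip : word (canon f' lo hi) =
          togglePerm v * word (canon f lo hi) * (togglePerm v)⁻¹ :=
        flip_word f f'
          (fun u w hc => by rcases hfprop u w hc with h | h <;> omega)
          v hnb hf'v hf'ne lo hi hlo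
          (fun x => le_trans (hfg x) (hghi x))
          (le_trans hv2 (hghi v))
      refine ⟨(togglePerm v)⁻¹ * w',
        mul_mem (inv_mem (Subgroup.subset_closure (Set.mem_range_self v))) hw', ?_⟩
      have hWf : word (canon f lo hi) =
          (togglePerm v)⁻¹ * word (canon f' lo hi) * togglePerm v := by
        rw [hflip]; group
      rw [hWf, hweq]
      group
end Part6
/-- Let `ι` be a Cartesian embedding of the finite ranked poset `P` into
`(P₁, P₂)`, and let `H p = rk₁ (ι p).1 − rk₂ (ι p).2`. Then toggle-promotion
`TogPro_H = T_H^b ∘ ⋯ ∘ T_H^a` (where `[a,b]` contains the image of `H`, and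
each `T_H^i` is the composition in any order of the toggles at elements with
`H`-value `i`) is conjugate to rowmotion in the toggle group of `P`. -/
theorem stmt17 {P P₁ P₂ : Type*} [Fintype P] [PartialOrder P]
    [Fintype P₁] [PartialOrder P₁] [Fintype P₂] [PartialOrder P₂]
    (rk : P → ℤ) (rk₁ : P₁ → ℤ) (rk₂ : P₂ → ℤ)
    (hrk : ∀ x y : P, x ⋖ y → rk y = rk x + 1)
    (hrk₁ : ∀ x y : P₁, x ⋖ y → rk₁ y = rk₁ x + 1)
    (hrk₂ : ∀ x y : P₂, x ⋖ y → rk₂ y = rk₂ x + 1)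
    (ι : P → P₁ × P₂) (hinj : Function.Injective ι)
    (hmono : ∀ x y : P, x ≤ y → ι x ≤ ι y)
    (hrank : ∀ p : P, rk p = rk₁ (ι p).1 + rk₂ (ι p).2)
    (a b : ℤ) (hab : ∀ p : P, a ≤ rk₁ (ι p).1 - rk₂ (ι p).2 ∧ rk₁ (ι p).1 - rk₂ (ι p).2 ≤ b)
    (T : ℤ → List P)
    (hT : ∀ i : ℤ, (T i).Nodup ∧ ∀ p : P, p ∈ T i ↔ rk₁ (ι p).1 - rk₂ (ι p).2 = i) :
    ∃ w ∈ toggleGroup P,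
      (((List.range (b + 1 - a).toNat).map fun j => a + (j : ℤ)).foldl
          (fun g i => ((T i).foldr (fun x g' => toggle x ∘ g') id) ∘ g) id) =
        ⇑w ∘ rowmotion ∘ ⇑w⁻¹ := by
  classical
  -- the labelling H
  set H : P → ℤ := fun p => rk₁ (ι p).1 - rk₂ (ι p).2 with hH
  -- monotonicity of the rank functions
  have hrk1mono : ∀ x y : P₁, x ≤ y → rk₁ x ≤ rk₁ y := by
    intro x y h
    rcases eq_or_lt_of_le h with rfl | hlt
    · exact le_refl _
    · exact (rank_lt rk₁ hrk₁ x y hlt).le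
  have hrk2mono : ∀ x y : P₂, x ≤ y → rk₂ x ≤ rk₂ y := by
    intro x y h
    rcases eq_or_lt_of_le h with rfl | hlt
    · exact le_refl _
    · exact (rank_lt rk₂ hrk₂ x y hlt).le
  -- H is a proper labelling
  have hHprop : ∀ x y : P, x ⋖ y → (H y = H x + 1 ∨ H y = H x - 1) := by
    intro x y hc
    have hle : ι x ≤ ι y := hmono x y hc.le
    have h1 : rk₁ (ι x).1 ≤ rk₁ (ι y).1 := hrk1mono _ _ hle.1
    have h2 : rk₂ (ι x).2 ≤ rk₂ (ι y).2 := hrk2mono _ _ hle.2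
    have h3 : rk y = rk x + 1 := hrk x y hc
    have h4 := hrank x
    have h5 := hrank y
    simp only [hH]
    omega
  -- constants
  set D : ℤ := ∑ p : P, |rk₁ (ι p).1| with hD
  set E2 : ℤ := ∑ p : P, |rk p| with hE2
  have hDp : ∀ q : P, |rk₁ (ι q).1| ≤ D :=
    fun q => Finset.single_le_sum (f := fun p : P => |rk₁ (ι p).1|)
      (fun i _ => abs_nonneg _) (Finset.mem_univ q)
  have hE2p : ∀ q : P, |rk q| ≤ E2 :=
    fun q => Finset.single_le_sum (f := fun p : P => |rk p|)
      (fun i _ => abs_nonneg _) (Finset.mem_univ q)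
  have hD0 : 0 ≤ D := Finset.sum_nonneg (fun i _ => abs_nonneg _)
  have hE20 : 0 ≤ E2 := Finset.sum_nonneg (fun i _ => abs_nonneg _)
  set g : P → ℤ := fun p => 2 * D - rk p with hg
  set hi : ℤ := |b| + 2 * D + E2 with hhi
  have hgprop : ∀ u w : P, u ⋖ w → (g w = g u + 1 ∨ g w = g u - 1) := by
    intro u w hc
    have := hrk u w hc
    simp only [hg]
    omega
  have hghi : ∀ x : P, g x ≤ hi := by
    intro x
    have h1 := hE2p x
    have h2 := abs_nonneg b
    simp only [hg, hhi]
    have : -rk x ≤ |rk x| := neg_le_abs _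
    omega
  have hHg : ∀ p : P, H p ≤ g p := by
    intro p
    have h1 := hrank p
    have h2 := hDp p
    have h3 : rk₁ (ι p).1 ≤ |rk₁ (ι p).1| := le_abs_self _
    simp only [hH, hg]
    omega
  have hHlo : ∀ p : P, a ≤ H p := fun p => (hab p).1
  have hHb : ∀ p : P, H p ≤ b := fun p => (hab p).2
  have hdvd : ∀ p : P, (2 : ℤ) ∣ (g p - H p) := by
    intro p
    refine ⟨D - rk₁ (ι p).1, ?_⟩
    have h1 := hrank p
    simp only [hg, hH]
    omega
  -- the conjugation
  obtain ⟨w, hw, hweq⟩ := conj_main g hgprop a hi hghi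
    (∑ x : P, (g x - H x).toNat) H hHprop hHlo hHg hdvd rfl
  -- the toggle-promotion word
  set L : List P := (ddlist a b).flatMap T with hL
  have hTn : ∀ i : ℤ, (T i).Nodup := fun i => (hT i).1
  have hTmem : ∀ (i : ℤ) (p : P), p ∈ T i ↔ H p = i := fun i p => (hT i).2 p
  have hLn : L.Nodup :=
    flat_nodup _ (ddlist_nodup a b) _ hTn
      (fun x i j hxi hxj => by rw [← (hTmem i x).mp hxi, ← (hTmem j x).mp hxj])
  have hLs : L.Pairwise (fun u v => H v ≤ H u) :=
    flat_sorted H _ (ddlist_pairwise a b) _ (fun i x hx => (hTmem i x).mp hx)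
  have hLfull : ∀ x : P, x ∈ L := by
    intro x
    rw [hL]
    exact List.mem_flatMap.mpr ⟨H x, mem_ddlist.mpr ⟨hHlo x, hHb x⟩,
      (hTmem _ x).mpr rfl⟩
  have hbhi : b ≤ hi := by
    have := le_abs_self b
    simp only [hhi]
    omega
  have hLperm : L.Perm (canon H a hi) := by
    rw [List.perm_ext_iff_of_nodup hLn (canon_nodup H a hi)]
    intro x
    simp only [hLfull x, true_iff]
    exact mem_canon.mpr ⟨hHlo x, le_trans (hHb x) hbhi⟩
  have hLword : word L = word (canon H a hi) :=
    sortinv H (comm_of_eq_f (fun u v hc => by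
      rcases hHprop u v hc with h | h <;> omega)) _ _ hLperm hLs (canon_sorted H a hi)
  -- the rowmotion word
  have hgfull : ∀ x : P, x ∈ canon g a hi :=
    fun x => mem_canon.mpr ⟨le_trans (hHlo x) (hHg x), hghi x⟩
  have hgpw : (canon g a hi).Pairwise (fun u v => ¬ v < u) := by
    refine (canon_sorted g a hi).imp ?_
    intro u v hle hlt
    have := rank_lt rk hrk v u hlt
    simp only [hg] at hle
    omega
  have hrow : wfun (canon g a hi) = rowmotion :=
    wfun_eq_rowmotion _ (canon_nodup g a hi) hgfull hgpw
  -- assemble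
  refine ⟨w, hw, ?_⟩
  have hexpr : (((List.range (b + 1 - a).toNat).map fun j => a + (j : ℤ)).foldl
      (fun g i => ((T i).foldr (fun x g' => toggle x ∘ g') id) ∘ g) id) =
      wfun L := by
    have h1 : (((List.range (b + 1 - a).toNat).map fun j => a + (j : ℤ)).foldl
        (fun g i => wfun (T i) ∘ g) id) =
        wfun (((List.range (b + 1 - a).toNat).map fun j => a + (j : ℤ)).reverse.flatMap T)
          ∘ id := foldl_wfun T _ id
    rw [Function.comp_id] at h1
    exact h1
  rw [hexpr]
  have hco : wfun L = ⇑(word L) := (word_coe L).symm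
  rw [hco, hLword, hweq]
  rw [Equiv.Perm.coe_mul, Equiv.Perm.coe_mul, word_coe, hrow]
  rfl
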